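/- arXiv:2003.12817 — 6 statements merged into one kernel-verified Lean document; each statement's English description precedes it below -/
import Mathlib

section
/- Consider the discrete-time linear dynamical system α_k = Φ α_{k−1} + Ψ v_k with state dimension N, input dimension L, admissible supports set U, and M = ∪_{S∈U} S. If there exists λ ∈ ℂ such that the complex N × (N+|M|) matrix [λI − Φ, Ψ_M] has rank strictly less than N, then the system is not U-sparse controllable. -/
open Matrix

open scoped Classical

noncomputable section

/-- The state trajectory of the discrete-time linear dynamical system
`α_k = Φ α_{k-1} + Ψ v_k`. -/
def traj {N L : ℕ} (Φ : Matrix (Fin N) (Fin N) ℝ) (Ψ : Matrix (Fin N) (Fin L) ℝ)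
    (x0 : Fin N → ℝ) (v : ℕ → Fin L → ℝ) : ℕ → Fin N → ℝ
  | 0 => x0
  | k + 1 => Φ.mulVec (traj Φ Ψ x0 v k) + Ψ.mulVec (v (k + 1))

/-- `U`-sparse controllability: any initial state can be steered to any final state in
finitely many steps using inputs whose supports are contained in members of `U`. -/
def SparseControllable {N L : ℕ} (Φ : Matrix (Fin N) (Fin N) ℝ)
    (Ψ : Matrix (Fin N) (Fin L) ℝ) (U : Set (Finset (Fin L))) : Prop :=
  ∀ x0 xf : Fin N → ℝ, ∃ K : ℕ, ∃ v : ℕ → Fin L → ℝ,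
    (∀ k, 1 ≤ k → k ≤ K → ∃ S ∈ U, ∀ i, v k i ≠ 0 → i ∈ S) ∧
    traj Φ Ψ x0 v K = xf

/-- Casting a real matrix-vector product to `ℂ`. -/
lemma cast_mulVec {N n : ℕ} (M : Matrix (Fin N) (Fin n) ℝ) (x : Fin n → ℝ) :
    (fun j => ((M *ᵥ x) j : ℂ)) = (M.map (fun r => (r : ℂ))) *ᵥ (fun i => (x i : ℂ)) := by
  funext j
  simp only [Matrix.mulVec, dotProduct, Matrix.map_apply]
  push_cast
  rfl

theorem not_sparse_controllable_of_PBH_rank_deficient {N L : ℕ} (s : ℕ)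
    (Φ : Matrix (Fin N) (Fin N) ℝ) (Ψ : Matrix (Fin N) (Fin L) ℝ)
    (U : Set (Finset (Fin L))) (hU : ∀ S ∈ U, S.card = s)
    (h : ∃ lam : ℂ,
        (Matrix.fromCols
            (lam • (1 : Matrix (Fin N) (Fin N) ℂ) - Φ.map (fun x => (x : ℂ)))
            ((Ψ.map (fun x => (x : ℂ))).submatrix id
              (Subtype.val : {i : Fin L // ∃ S ∈ U, i ∈ S} → Fin L))).rank < N) :
    ¬ SparseControllable Φ Ψ U := by
  obtain ⟨lam, hrank⟩ := h
  intro hc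
  set Φc := Φ.map (fun x => (x : ℂ)) with hΦc
  set Ψc := Ψ.map (fun x => (x : ℂ)) with hΨc
  set A := Matrix.fromCols (lam • (1 : Matrix (Fin N) (Fin N) ℂ) - Φc)
      (Ψc.submatrix id (Subtype.val : {i : Fin L // ∃ S ∈ U, i ∈ S} → Fin L)) with hA
  -- find a nonzero left null vector of A
  obtain ⟨w, hw0, hwA⟩ : ∃ w : Fin N → ℂ, w ≠ 0 ∧ w ᵥ* A = 0 := by
    have hrt : Aᵀ.rank < N := by rw [Matrix.rank_transpose]; exact hrank
    have hker : LinearMap.ker Aᵀ.mulVecLin ≠ ⊥ := by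
      intro hkbot
      have hrn := LinearMap.finrank_range_add_finrank_ker Aᵀ.mulVecLin
      rw [hkbot, finrank_bot, add_zero] at hrn
      rw [Matrix.rank] at hrt
      simp only [Module.finrank_pi, Fintype.card_fin] at hrn
      omega
    obtain ⟨w, hw, hwne⟩ := Submodule.exists_mem_ne_zero_of_ne_bot hker
    refine ⟨w, hwne, ?_⟩
    have hz : Aᵀ *ᵥ w = 0 := hw
    rwa [Matrix.mulVec_transpose] at hz
  rw [hA, Matrix.vecMul_fromCols] at hwA
  have h1 : w ᵥ* (lam • (1 : Matrix (Fin N) (Fin N) ℂ) - Φc) = 0 := by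
    funext j; exact congrFun hwA (Sum.inl j)
  have h2 : ∀ i : Fin L, (∃ S ∈ U, i ∈ S) → (w ᵥ* Ψc) i = 0 := by
    intro i hi
    have := congrFun hwA (Sum.inr ⟨i, hi⟩)
    simpa [Matrix.vecMul, dotProduct, Matrix.submatrix] using this
  have hsmul : w ᵥ* (lam • (1 : Matrix (Fin N) (Fin N) ℂ)) = lam • w := by
    funext i
    simp [Matrix.vecMul, dotProduct, Matrix.one_apply, mul_comm,
      Finset.sum_ite_eq, mul_ite]
  have hΦw : w ᵥ* Φc = lam • w := by
    have h1' : w ᵥ* (lam • (1 : Matrix (Fin N) (Fin N) ℂ)) - w ᵥ* Φc = 0 := by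
      rw [← Matrix.vecMul_sub]; exact h1
    have := sub_eq_zero.mp h1'
    rw [hsmul] at this
    exact this.symm
  -- the key invariant
  have key : ∀ (v : ℕ → Fin L → ℝ) (K : ℕ),
      (∀ k, 1 ≤ k → k ≤ K → ∃ S ∈ U, ∀ i, v k i ≠ 0 → i ∈ S) →
      w ⬝ᵥ (fun j => ((traj Φ Ψ 0 v K) j : ℂ)) = 0 := by
    intro v K hv
    induction K with
    | zero => simp [traj, dotProduct]
    | succ k ih =>
      have hk := ih (fun k' h1 h2 => hv k' h1 (h2.trans (Nat.le_succ k)))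
      have htraj : (fun j => ((traj Φ Ψ 0 v (k + 1)) j : ℂ)) =
          Φc *ᵥ (fun j => ((traj Φ Ψ 0 v k) j : ℂ)) + Ψc *ᵥ (fun i => ((v (k + 1) i : ℂ))) := by
        funext j
        show ((Φ *ᵥ traj Φ Ψ 0 v k + Ψ *ᵥ v (k + 1)) j : ℂ) = _
        have e1 := congrFun (cast_mulVec Φ (traj Φ Ψ 0 v k)) j
        have e2 := congrFun (cast_mulVec Ψ (v (k + 1))) j
        simp only [Pi.add_apply]
        push_cast
        try rw [e1, e2]
        try rfl
      rw [htraj, dotProduct_add, Matrix.dotProduct_mulVec, Matrix.dotProduct_mulVec,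
        hΦw]
      have hterm2 : (w ᵥ* Ψc) ⬝ᵥ (fun i => ((v (k + 1) i : ℂ))) = 0 := by
        obtain ⟨S, hS, hsupp⟩ := hv (k + 1) (Nat.le_add_left 1 k) le_rfl
        apply Finset.sum_eq_zero
        intro i _
        by_cases hvi : v (k + 1) i = 0
        · simp [hvi]
        · have : (w ᵥ* Ψc) i = 0 := h2 i ⟨S, hS, hsupp i hvi⟩
          simp [this]
      rw [hterm2, add_zero]
      have : (lam • w) ⬝ᵥ (fun j => ((traj Φ Ψ 0 v k) j : ℂ)) =
          lam * (w ⬝ᵥ (fun j => ((traj Φ Ψ 0 v k) j : ℂ))) := smul_dotProduct lam w _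
      rw [this, hk, mul_zero]
  -- derive the contradiction
  obtain ⟨j, hj⟩ : ∃ j, w j ≠ 0 := Function.ne_iff.mp hw0
  obtain ⟨K, v, hv, hend⟩ := hc 0 (Pi.single j 1)
  have h0 := key v K hv
  rw [hend] at h0
  have : w ⬝ᵥ (fun j' => (((Pi.single j (1:ℝ) : Fin N → ℝ) j' : ℝ) : ℂ)) = w j := by
    simp [dotProduct, Pi.single_apply, apply_ite (fun r : ℝ => (r : ℂ))]
  rw [this] at h0
  exact hj h0
end
end

section
/- For every B ≥ 1 there exist constants δ₀ ∈ (0,1) and ε ∈ (0,1), depending only on B, with the following property: for every p ∈ [0,1], every random variable ξ with variance 1 and E[ξ⁴] ≤ B, and every random variable ζ ∈ {0,1} independent of ξ with P(ζ = 1) = p, the Lévy concentration function satisfies L(ζξ, ε) ≤ 1 − δ₀ p. -/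
open MeasureTheory ProbabilityTheory

noncomputable section

/-- The Lévy concentration function `L(X, ε) = sup_z P(|X − z| ≤ ε)`. -/
def levyConcentration {Ω : Type} [MeasurableSpace Ω] (μ : Measure Ω) (X : Ω → ℝ)
    (ε : ℝ) : ℝ :=
  ⨆ z : ℝ, (μ {ω | |X ω - z| ≤ ε}).toReal

set_option maxHeartbeats 1000000 in
lemma anticonc {Ω : Type} [MeasurableSpace Ω] (μ : Measure Ω) [IsProbabilityMeasure μ]
    (ξ : Ω → ℝ) (hξ : Measurable ξ) (hvar : variance ξ μ = 1)
    (hint4 : Integrable (fun ω => ξ ω ^ 4) μ) {B : ℝ} (hB : 1 ≤ B)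
    (hB4 : (∫ ω, ξ ω ^ 4 ∂μ) ≤ B) (z : ℝ) :
    (μ {ω | |ξ ω - z| ≤ 1/2}).toReal ≤ 1 - 1 / (1088 * B ^ 4) := by
  have hB0 : (0:ℝ) < B := by linarith
  have hB41 : (1:ℝ) ≤ B ^ 4 := one_le_pow₀ hB
  have hδpos : (0:ℝ) < 1 / (1088 * B ^ 4) := by positivity
  have hδle : 1 / (1088 * B ^ 4) ≤ 1/2 := by
    rw [div_le_div_iff₀ (by positivity) (by norm_num)]
    nlinarith
  have hbnd4 : Integrable (fun ω => (ξ ω ^ 4 + 1) / 2) μ := by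
    have := (hint4.add (integrable_const (1:ℝ))).div_const 2
    simpa using this
  have hint2 : Integrable (fun ω => ξ ω ^ 2) μ := by
    refine hbnd4.mono' ((hξ.pow_const 2).aestronglyMeasurable)
      (Filter.Eventually.of_forall fun ω => ?_)
    rw [Real.norm_eq_abs, abs_of_nonneg (by positivity)]
    nlinarith [sq_nonneg (ξ ω ^ 2 - 1)]
  have hbnd2 : Integrable (fun ω => (ξ ω ^ 2 + 1) / 2) μ := by
    have := (hint2.add (integrable_const (1:ℝ))).div_const 2
    simpa using this
  have hint1 : Integrable ξ μ := by
    refine hbnd2.mono' hξ.aestronglyMeasurable (Filter.Eventually.of_forall fun ω => ?_)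
    rw [Real.norm_eq_abs]
    nlinarith [sq_nonneg (|ξ ω| - 1), sq_abs (ξ ω)]
  have hEξ2 : ∫ ω, ξ ω ^ 2 ∂μ ≤ B := by
    have h1 : ∫ ω, ξ ω ^ 2 ∂μ ≤ ∫ ω, (ξ ω ^ 4 + 1) / 2 ∂μ := by
      refine integral_mono hint2 hbnd4 (fun ω => ?_)
      nlinarith [sq_nonneg (ξ ω ^ 2 - 1)]
    have h2 : ∫ ω, (ξ ω ^ 4 + 1) / 2 ∂μ = ((∫ ω, ξ ω ^ 4 ∂μ) + 1) / 2 := by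
      rw [integral_div, integral_add hint4 (integrable_const 1), integral_const]
      simp [measure_univ]
    rw [h2] at h1
    linarith
  rcases le_or_gt (2*B) |z| with hz | hz
  · -- large z case
    have hsub : {ω | |ξ ω - z| ≤ 1/2} ⊆ {ω | 2*B ≤ ξ ω ^ 2} := by
      intro ω hω
      simp only [Set.mem_setOf_eq] at *
      have h1 : |z| - |ξ ω| ≤ |ξ ω - z| := by
        have := abs_sub_abs_le_abs_sub z (ξ ω)
        rwa [abs_sub_comm] at this
      have h2 : ξ ω ^ 2 = |ξ ω| ^ 2 := (sq_abs _).symm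
      nlinarith [abs_nonneg (ξ ω)]
    have hmk := mul_meas_ge_le_integral_of_nonneg
      (μ := μ) (f := fun ω => ξ ω ^ 2)
      (Filter.Eventually.of_forall fun ω => sq_nonneg _) hint2 (2*B)
    have hmono : (μ {ω | |ξ ω - z| ≤ 1/2}).toReal ≤ (μ {ω | 2*B ≤ ξ ω ^ 2}).toReal :=
      ENNReal.toReal_mono (measure_ne_top μ _) (measure_mono hsub)
    simp only [measureReal_def] at hmk
    nlinarith [ENNReal.toReal_nonneg (a := μ {ω | 2*B ≤ ξ ω ^ 2})]
  · -- bounded z case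
    set E : Set Ω := {ω | |ξ ω - z| ≤ 1/2} with hEdef
    have hEmeas : MeasurableSet E := measurableSet_le ((hξ.sub_const z).abs) measurable_const
    have hK2pos : (0:ℝ) < 544 * B ^ 4 := by positivity
    have hpt : ∀ ω, (ξ ω - z)^2 ≤
        1/4 + Eᶜ.indicator (fun _ => (544 * B ^ 4 : ℝ)) ω + (ξ ω - z)^4 / (544 * B ^ 4) := by
      intro ω
      by_cases hω : |ξ ω - z| ≤ 1/2
      · rw [Set.indicator_of_notMem (by simpa [hEdef] using hω)]
        have h1 : (ξ ω - z)^2 ≤ 1/4 := by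
          nlinarith [abs_nonneg (ξ ω - z), sq_abs (ξ ω - z)]
        have h2 : (0:ℝ) ≤ (ξ ω - z)^4 / (544 * B ^ 4) := by positivity
        linarith
      · rw [Set.indicator_of_mem (by simpa [hEdef] using hω)]
        by_cases h2 : (ξ ω - z)^2 ≤ 544 * B ^ 4
        · have h3 : (0:ℝ) ≤ (ξ ω - z)^4 / (544 * B ^ 4) := by positivity
          linarith
        · push_neg at h2
          have h4 : (ξ ω - z)^2 ≤ (ξ ω - z)^4 / (544 * B ^ 4) := by
            rw [le_div_iff₀ hK2pos]
            nlinarith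
          linarith
    have hbndsq : Integrable (fun ω => 2 * ξ ω ^ 2 + 2 * z ^ 2) μ := by
      have := (hint2.const_mul 2).add (integrable_const (2*z^2))
      exact this
    have hintsq : Integrable (fun ω => (ξ ω - z)^2) μ := by
      refine hbndsq.mono' (((hξ.sub_const z).pow_const 2).aestronglyMeasurable)
        (Filter.Eventually.of_forall fun ω => ?_)
      rw [Real.norm_eq_abs, abs_of_nonneg (sq_nonneg _)]
      nlinarith [sq_nonneg (ξ ω + z)]
    have hbnd4' : Integrable (fun ω => 8 * ξ ω ^ 4 + 8 * z ^ 4) μ := by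
      have := (hint4.const_mul 8).add (integrable_const (8*z^4))
      exact this
    have hint4' : Integrable (fun ω => (ξ ω - z)^4) μ := by
      refine hbnd4'.mono' (((hξ.sub_const z).pow_const 4).aestronglyMeasurable)
        (Filter.Eventually.of_forall fun ω => ?_)
      rw [Real.norm_eq_abs, abs_of_nonneg (by positivity)]
      nlinarith [sq_nonneg (ξ ω + z), sq_nonneg (ξ ω - z), sq_nonneg (ξ ω ^ 2 - z^2),
        sq_nonneg ((ξ ω - z)^2 - 2*ξ ω^2 - 2*z^2)]
    have hindint : Integrable (Eᶜ.indicator (fun _ => (544 * B ^ 4 : ℝ))) μ :=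
      (integrable_const _).indicator hEmeas.compl
    have hi14 : Integrable (fun ω => 1/4 + Eᶜ.indicator (fun _ => (544 * B ^ 4 : ℝ)) ω) μ :=
      (integrable_const _).add hindint
    have hidiv : Integrable (fun ω => (ξ ω - z)^4 / (544 * B ^ 4)) μ := hint4'.div_const _
    have hRHS : ∫ ω, (1/4 + Eᶜ.indicator (fun _ => (544 * B ^ 4 : ℝ)) ω
          + (ξ ω - z)^4 / (544 * B ^ 4)) ∂μ
        = 1/4 + (544 * B ^ 4) * (μ Eᶜ).toReal + (∫ ω, (ξ ω - z)^4 ∂μ) / (544 * B ^ 4) := by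
      rw [integral_add hi14 hidiv, integral_add (integrable_const _) hindint, integral_const,
        integral_indicator_const _ hEmeas.compl, integral_div]
      simp only [measure_univ, ENNReal.toReal_one, smul_eq_mul, one_smul, measureReal_def]
      ring
    have hmain : ∫ ω, (ξ ω - z)^2 ∂μ ≤
        1/4 + (544 * B ^ 4) * (μ Eᶜ).toReal + (∫ ω, (ξ ω - z)^4 ∂μ) / (544 * B ^ 4) := by
      rw [← hRHS]
      exact integral_mono hintsq (hi14.add hidiv) hpt
    have h4m : ∫ ω, (ξ ω - z)^4 ∂μ ≤ 136 * B^4 := by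
      have hbc : Integrable (fun ω => 8 * ξ ω ^ 4 + 8 * (2*B)^4) μ := by
        have := (hint4.const_mul 8).add (integrable_const (8*(2*B)^4))
        exact this
      have h1 : ∫ ω, (ξ ω - z)^4 ∂μ ≤ ∫ ω, (8 * ξ ω ^ 4 + 8 * (2*B)^4) ∂μ := by
        refine integral_mono hint4' hbc (fun ω => ?_)
        have hz4 : z^4 ≤ (2*B)^4 := by
          calc z^4 = |z|^4 := by rw [← abs_pow, abs_of_nonneg (by positivity)]
          _ ≤ (2*B)^4 := pow_le_pow_left₀ (abs_nonneg z) hz.le 4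
        nlinarith [sq_nonneg (ξ ω + z), sq_nonneg (ξ ω - z), sq_nonneg (ξ ω ^ 2 - z^2),
          sq_nonneg ((ξ ω - z)^2 - 2*ξ ω^2 - 2*z^2)]
      have h2 : ∫ ω, (8 * ξ ω ^ 4 + 8 * (2*B)^4) ∂μ = 8 * (∫ ω, ξ ω ^ 4 ∂μ) + 8*(2*B)^4 := by
        rw [integral_add (hint4.const_mul 8) (integrable_const _), integral_const_mul,
          integral_const]
        simp [measure_univ]
      rw [h2] at h1
      nlinarith [sq_nonneg (B-1), sq_nonneg (B^2-1), sq_nonneg (B^2-B)]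
    have hmem2 : MemLp ξ 2 μ := (memLp_two_iff_integrable_sq hξ.aestronglyMeasurable).2 hint2
    have hvd := variance_eq_sub hmem2
    rw [hvar] at hvd
    simp only [Pi.pow_apply] at hvd
    have hexp : ∫ ω, (ξ ω - z)^2 ∂μ = ∫ ω, ξ ω^2 ∂μ - 2*z*(∫ ω, ξ ω ∂μ) + z^2 := by
      have heq : (fun ω => (ξ ω - z)^2) = fun ω => (ξ ω^2 - 2*z * ξ ω) + z^2 := by
        funext ω; ring
      have hisub : Integrable (fun ω => ξ ω^2 - 2*z * ξ ω) μ := hint2.sub (hint1.const_mul (2*z))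
      rw [heq, integral_add hisub (integrable_const _),
        integral_sub hint2 (hint1.const_mul _), integral_const_mul, integral_const]
      simp [measure_univ]
    have hlow : 1 ≤ ∫ ω, (ξ ω - z)^2 ∂μ := by
      rw [hexp]
      nlinarith [sq_nonneg ((∫ ω, ξ ω ∂μ) - z)]
    have hq : 1 / (1088 * B ^ 4) ≤ (μ Eᶜ).toReal := by
      rw [div_le_iff₀ (by positivity)]
      have hd : (∫ ω, (ξ ω - z)^4 ∂μ) / (544 * B ^ 4) ≤ 1/4 := by
        rw [div_le_iff₀ hK2pos]
        nlinarith
      nlinarith [hmain, hlow, hd]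
    have hEq : (μ E).toReal = 1 - (μ Eᶜ).toReal := by
      have h := measure_add_measure_compl (μ := μ) hEmeas
      rw [measure_univ] at h
      have h2 := congrArg ENNReal.toReal h
      rw [ENNReal.toReal_add (measure_ne_top μ _) (measure_ne_top μ _)] at h2
      simp only [ENNReal.toReal_one] at h2
      linarith
    rw [hEq]
    linarith

/-- For every `B ≥ 1` there are constants `δ₀, ε ∈ (0,1)` depending only on `B` such that,
for every `p ∈ [0,1]`, every random variable `ξ` with variance `1` and `E[ξ⁴] ≤ B`, and
every `{0,1}`-valued random variable `ζ` independent of `ξ` with `P(ζ = 1) = p`, the Lévy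
concentration function satisfies `L(ζξ, ε) ≤ 1 − δ₀ p`. -/
theorem levy_concentration_bernoulli_product :
    ∀ B : ℝ, 1 ≤ B →
      ∃ δ₀ ∈ Set.Ioo (0 : ℝ) 1, ∃ ε ∈ Set.Ioo (0 : ℝ) 1,
        ∀ p : ℝ, 0 ≤ p → p ≤ 1 →
        ∀ (Ω : Type) [MeasurableSpace Ω] (μ : Measure Ω) [IsProbabilityMeasure μ]
          (ξ ζ : Ω → ℝ),
          Measurable ξ → Measurable ζ →
          variance ξ μ = 1 →
          Integrable (fun ω => ξ ω ^ 4) μ →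
          (∫ ω, ξ ω ^ 4 ∂μ) ≤ B →
          (∀ ω, ζ ω = 0 ∨ ζ ω = 1) →
          IndepFun ζ ξ μ →
          μ {ω | ζ ω = 1} = ENNReal.ofReal p →
          levyConcentration μ (fun ω => ζ ω * ξ ω) ε ≤ 1 - δ₀ * p := by
  intro B hB
  have hB0 : (0:ℝ) < B := by linarith
  have hB41 : (1:ℝ) ≤ B ^ 4 := one_le_pow₀ hB
  refine ⟨1 / (1088 * B ^ 4), ⟨by positivity, by
    rw [div_lt_one (by positivity)]; nlinarith⟩, 1/2, ⟨by norm_num, by norm_num⟩, ?_⟩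
  intro p hp0 hp1 Ω _ μ _ ξ ζ hξ hζ hvar hint4 hB4 hζ01 hIndep hpmeas
  have hδpos : (0:ℝ) < 1 / (1088 * B ^ 4) := by positivity
  refine ciSup_le fun z => ?_
  -- preimage sets
  have hA1 : {ω | ζ ω = 1} = ζ ⁻¹' {1} := by ext ω; simp
  have hA1meas : MeasurableSet (ζ ⁻¹' {1} : Set Ω) := hζ (measurableSet_singleton 1)
  have hsmeas : MeasurableSet {x : ℝ | |x - z| ≤ 1/2} :=
    measurableSet_le (measurable_id.sub_const z).abs measurable_const
  have hμA1 : μ (ζ ⁻¹' {1}) = ENNReal.ofReal p := by rw [← hA1]; exact hpmeas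
  have hsub : {ω | |ζ ω * ξ ω - z| ≤ 1/2} ⊆
      (ζ ⁻¹' {1})ᶜ ∪ (ζ ⁻¹' {1} ∩ ξ ⁻¹' {x | |x - z| ≤ 1/2}) := by
    intro ω hω
    rcases hζ01 ω with h0 | h1
    · left; simp [Set.mem_preimage, h0]
    · right
      refine ⟨by simp [Set.mem_preimage, h1], ?_⟩
      simp only [Set.mem_setOf_eq] at hω
      simp only [Set.mem_preimage, Set.mem_setOf_eq]
      rwa [h1, one_mul] at hω
  have hmul := hIndep.measure_inter_preimage_eq_mul {1} {x | |x - z| ≤ 1/2}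
    (measurableSet_singleton 1) hsmeas
  have hcompl : μ ((ζ ⁻¹' {1})ᶜ) = 1 - ENNReal.ofReal p := by
    rw [prob_compl_eq_one_sub hA1meas, hμA1]
  have hle : μ {ω | |ζ ω * ξ ω - z| ≤ 1/2} ≤
      (1 - ENNReal.ofReal p) + ENNReal.ofReal p * μ (ξ ⁻¹' {x | |x - z| ≤ 1/2}) := by
    calc μ {ω | |ζ ω * ξ ω - z| ≤ 1/2}
        ≤ μ ((ζ ⁻¹' {1})ᶜ ∪ (ζ ⁻¹' {1} ∩ ξ ⁻¹' {x | |x - z| ≤ 1/2})) := measure_mono hsub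
      _ ≤ μ ((ζ ⁻¹' {1})ᶜ) + μ (ζ ⁻¹' {1} ∩ ξ ⁻¹' {x | |x - z| ≤ 1/2}) := measure_union_le _ _
      _ = (1 - ENNReal.ofReal p) + ENNReal.ofReal p * μ (ξ ⁻¹' {x | |x - z| ≤ 1/2}) := by
          rw [hcompl, hmul, hμA1]
  have hnetop : ((1 - ENNReal.ofReal p) + ENNReal.ofReal p * μ (ξ ⁻¹' {x | |x - z| ≤ 1/2}))
      ≠ ⊤ := by
    apply ENNReal.add_ne_top.2
    constructor
    · exact ne_top_of_le_ne_top ENNReal.one_ne_top tsub_le_self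
    · exact ENNReal.mul_ne_top ENNReal.ofReal_ne_top (measure_ne_top μ _)
  have hle' := ENNReal.toReal_mono hnetop hle
  rw [ENNReal.toReal_add (ne_top_of_le_ne_top ENNReal.one_ne_top tsub_le_self)
      (ENNReal.mul_ne_top ENNReal.ofReal_ne_top (measure_ne_top μ _)),
    ENNReal.toReal_sub_of_le (ENNReal.ofReal_le_one.2 hp1) ENNReal.one_ne_top,
    ENNReal.toReal_mul, ENNReal.toReal_ofReal hp0, ENNReal.toReal_one] at hle'
  have hpre : (ξ ⁻¹' {x | |x - z| ≤ 1/2}) = {ω | |ξ ω - z| ≤ 1/2} := by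
    ext ω; simp [Set.mem_preimage]
  have hanti := anticonc μ ξ hξ hvar hint4 hB hB4 z
  rw [hpre] at hle'
  have hnn : 0 ≤ (μ {ω | |ξ ω - z| ≤ 1/2}).toReal := ENNReal.toReal_nonneg
  nlinarith [hle', hanti, hnn]
end
end

section
/- Let N, s, m be positive integers with m dividing both N and s and s ≤ N. Let U₁ be the unconstrained sparsity family (all s-subsets of {1,…,N}), U₂ the piece-wise sparsity family, and U₃ the block sparsity family. Then for every 0 ≤ i ≤ s, Q(i,U₃) ≤ Q(i,U₂) ≤ Q(i,U₁), where Q(i,U) is the number of i-subsets of {1,…,N} contained in some member of U. -/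
open scoped Classical

/-- The `i`-th piece `{(i-1)·N/m + j : 1 ≤ j ≤ N/m}` (0-indexed) of `{1,…,N}`. -/
def piece (N m : ℕ) (i : Fin m) : Finset (Fin N) :=
  Finset.univ.filter fun a : Fin N => a.val / (N / m) = i.val

/-- The `i`-th block `B_i = {(i-1)m + j : 1 ≤ j ≤ m}` (0-indexed) of `{1,…,N}`. -/
def block (N m : ℕ) (i : Fin (N / m)) : Finset (Fin N) :=
  Finset.univ.filter fun a : Fin N => a.val / m = i.val

/-- Unconstrained sparsity family: all `s`-subsets of `{1,…,N}`. -/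
def U1 (N s : ℕ) : Set (Finset (Fin N)) := {S | S.card = s}

/-- Piece-wise sparsity family: unions of `s/m`-subsets, one from each of the `m` pieces. -/
def U2 (N s m : ℕ) : Set (Finset (Fin N)) :=
  {S | ∃ T : Fin m → Finset (Fin N),
    (∀ i, T i ⊆ piece N m i ∧ (T i).card = s / m) ∧ S = Finset.univ.biUnion T}

/-- Block sparsity family: unions of `s/m` of the `N/m` blocks of size `m`. -/
def U3 (N s m : ℕ) : Set (Finset (Fin N)) :=
  {S | ∃ I : Finset (Fin (N / m)), I.card = s / m ∧ S = I.biUnion (block N m)}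

/-- `Q t U` counts the `t`-subsets of `{1,…,N}` contained in some member of `U`. -/
noncomputable def Q {N : ℕ} (t : ℕ) (U : Set (Finset (Fin N))) : ℕ :=
  (Finset.univ.filter fun I : Finset (Fin N) => I.card = t ∧ ∃ S ∈ U, I ⊆ S).card

/-- The "transpose" map sending the element at position `p` of block `b` to the
element at position `b` of piece `p`. -/
def trf (N m : ℕ) (hm : 0 < m) (hmN : m ∣ N) (a : Fin N) : Fin N :=
  ⟨N / m * (a.val % m) + a.val / m, by
    have hN : N / m * m = N := Nat.div_mul_cancel hmN
    have h2 : a.val / m < N / m := (Nat.div_lt_iff_lt_mul hm).mpr (by rw [hN]; exact a.isLt)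
    have h1 : a.val % m < m := Nat.mod_lt _ hm
    calc N / m * (a.val % m) + a.val / m < N / m * (a.val % m) + N / m := by omega
      _ = N / m * (a.val % m + 1) := by ring
      _ ≤ N / m * m := Nat.mul_le_mul le_rfl h1
      _ = N := hN⟩

lemma trf_div (N m : ℕ) (hm : 0 < m) (hmN : m ∣ N) (a : Fin N) :
    (trf N m hm hmN a).val / (N / m) = a.val % m := by
  have hn : 0 < N / m := Nat.div_pos (Nat.le_of_dvd a.pos hmN) hm
  have hN : N / m * m = N := Nat.div_mul_cancel hmN
  have h2 : a.val / m < N / m := (Nat.div_lt_iff_lt_mul hm).mpr (by rw [hN]; exact a.isLt)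
  show (N / m * (a.val % m) + a.val / m) / (N / m) = a.val % m
  rw [Nat.mul_add_div hn, Nat.div_eq_of_lt h2, Nat.add_zero]

lemma trf_mod (N m : ℕ) (hm : 0 < m) (hmN : m ∣ N) (a : Fin N) :
    (trf N m hm hmN a).val % (N / m) = a.val / m := by
  have hN : N / m * m = N := Nat.div_mul_cancel hmN
  have h2 : a.val / m < N / m := (Nat.div_lt_iff_lt_mul hm).mpr (by rw [hN]; exact a.isLt)
  show (N / m * (a.val % m) + a.val / m) % (N / m) = a.val / m
  rw [Nat.mul_add_mod, Nat.mod_eq_of_lt h2]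

lemma trf_inj (N m : ℕ) (hm : 0 < m) (hmN : m ∣ N) :
    Function.Injective (trf N m hm hmN) := by
  intro a b h
  have hv : (trf N m hm hmN a).val = (trf N m hm hmN b).val := congrArg Fin.val h
  have h1 : a.val % m = b.val % m := by
    rw [← trf_div N m hm hmN a, ← trf_div N m hm hmN b, hv]
  have h2 : a.val / m = b.val / m := by
    rw [← trf_mod N m hm hmN a, ← trf_mod N m hm hmN b, hv]
  exact Fin.ext (by rw [← Nat.div_add_mod a.val m, ← Nat.div_add_mod b.val m, h1, h2])

lemma piece_card (N m : ℕ) (hm : 0 < m) (hmN : m ∣ N) (hN : 0 < N) (p : Fin m) :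
    (piece N m p).card = N / m := by
  have hn : 0 < N / m := Nat.div_pos (Nat.le_of_dvd hN hmN) hm
  have hNmn : m * (N / m) = N := Nat.mul_div_cancel' hmN
  have hcard : (Finset.univ : Finset (Fin (N / m))).card = N / m := by simp
  rw [← hcard]
  refine Finset.card_bij' (fun x _ => (⟨x.val % (N / m), Nat.mod_lt _ hn⟩ : Fin (N / m)))
    (fun b _ => (⟨N / m * p.val + b.val, ?_⟩ : Fin N)) ?_ ?_ ?_ ?_
  · calc N / m * p.val + b.val < N / m * p.val + N / m := by omega
      _ = N / m * (p.val + 1) := by ring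
      _ ≤ N / m * m := Nat.mul_le_mul le_rfl p.isLt
      _ = N := by rw [mul_comm]; exact hNmn
  · intro a ha; exact Finset.mem_univ _
  · intro b _
    simp only [piece, Finset.mem_filter, Finset.mem_univ, true_and]
    rw [Nat.mul_add_div hn, Nat.div_eq_of_lt b.isLt, Nat.add_zero]
  · intro a ha
    simp only [piece, Finset.mem_filter, Finset.mem_univ, true_and] at ha
    apply Fin.ext
    dsimp only
    have h := Nat.div_add_mod a.val (N / m)
    rw [ha] at h
    omega
  · intro b _
    apply Fin.ext
    dsimp only
    rw [Nat.mul_add_mod, Nat.mod_eq_of_lt b.isLt]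

theorem Q_block_le_Q_piecewise_le_Q_unconstrained (N s m : ℕ)
    (hN : 0 < N) (hs : 0 < s) (hm : 0 < m) (hmN : m ∣ N) (hms : m ∣ s) (hsN : s ≤ N) :
    ∀ i ≤ s, Q i (U3 N s m) ≤ Q i (U2 N s m) ∧ Q i (U2 N s m) ≤ Q i (U1 N s) := by
  have hn : 0 < N / m := Nat.div_pos (Nat.le_of_dvd hN hmN) hm
  have hNmn : m * (N / m) = N := Nat.mul_div_cancel' hmN
  have hsm_le : s / m ≤ N / m := Nat.div_le_div_right hsN
  intro i hi
  constructor
  · -- Q i U3 ≤ Q i U2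
    unfold Q
    apply Finset.card_le_card_of_injOn (fun I => I.image (trf N m hm hmN))
    · intro I hI
      simp only [Finset.mem_coe, Finset.mem_filter, Finset.mem_univ, true_and] at hI ⊢
      obtain ⟨hcard, S, hS, hIS⟩ := hI
      simp only [U3, Set.mem_setOf_eq] at hS
      obtain ⟨J, hJcard, rfl⟩ := hS
      refine ⟨by rw [Finset.card_image_of_injective _ (trf_inj N m hm hmN)]; exact hcard, ?_⟩
      set I' := I.image (trf N m hm hmN) with hI'def
      -- each piece meets I' in at most s/m elements
      have hkey : ∀ p : Fin m, (I' ∩ piece N m p).card ≤ s / m := by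
        intro p
        rw [← hJcard]
        apply Finset.card_le_card_of_injOn
          (fun x => (⟨x.val % (N / m), Nat.mod_lt _ hn⟩ : Fin (N / m)))
        · intro x hx
          rw [Finset.mem_coe, Finset.mem_inter] at hx
          obtain ⟨a, haI, rfl⟩ := Finset.mem_image.mp hx.1
          obtain ⟨j, hjJ, hj⟩ := Finset.mem_biUnion.mp (hIS haI)
          simp only [block, Finset.mem_filter, Finset.mem_univ, true_and] at hj
          have : (trf N m hm hmN a).val % (N / m) = j.val := by
            rw [trf_mod]; exact hj
          have : (⟨(trf N m hm hmN a).val % (N / m), Nat.mod_lt _ hn⟩ : Fin (N / m)) = j :=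
            Fin.ext this
          show (⟨(trf N m hm hmN a).val % (N / m), Nat.mod_lt _ hn⟩ : Fin (N / m)) ∈ J
          rw [this]; exact hjJ
        · intro x hx y hy hxy
          have hx' := Finset.mem_inter.mp (Finset.mem_coe.mp hx)
          have hy' := Finset.mem_inter.mp (Finset.mem_coe.mp hy)
          have hxp : x.val / (N / m) = p.val := by
            have := hx'.2; simp only [piece, Finset.mem_filter, Finset.mem_univ, true_and] at this
            exact this
          have hyp : y.val / (N / m) = p.val := by
            have := hy'.2; simp only [piece, Finset.mem_filter, Finset.mem_univ, true_and] at this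
            exact this
          have hmod := congrArg Fin.val hxy
          dsimp only at hmod
          have hdx := Nat.div_add_mod x.val (N / m)
          have hdy := Nat.div_add_mod y.val (N / m)
          rw [hxp] at hdx
          rw [hyp] at hdy
          exact Fin.ext (by omega)
      -- extend each piece intersection to an s/m subset of the piece
      have hex : ∀ p : Fin m, ∃ Tp : Finset (Fin N),
          I' ∩ piece N m p ⊆ Tp ∧ Tp ⊆ piece N m p ∧ Tp.card = s / m := by
        intro p
        exact Finset.exists_subsuperset_card_eq (Finset.inter_subset_right) (hkey p)
          (by rw [piece_card N m hm hmN hN]; exact hsm_le)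
      choose T hT1 hT2 hT3 using hex
      refine ⟨Finset.univ.biUnion T, ⟨T, fun p => ⟨hT2 p, hT3 p⟩, rfl⟩, ?_⟩
      intro x hx
      have hxlt : x.val / (N / m) < m := (Nat.div_lt_iff_lt_mul hn).mpr (by rw [hNmn]; exact x.isLt)
      apply Finset.mem_biUnion.mpr
      refine ⟨⟨x.val / (N / m), hxlt⟩, Finset.mem_univ _, ?_⟩
      apply hT1
      rw [Finset.mem_inter]
      exact ⟨hx, by simp only [piece, Finset.mem_filter, Finset.mem_univ, true_and]⟩
    · exact (Finset.image_injective (trf_inj N m hm hmN)).injOn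
  · -- Q i U2 ≤ Q i U1
    unfold Q
    apply Finset.card_le_card
    intro I hI
    simp only [Finset.mem_filter, Finset.mem_univ, true_and] at hI ⊢
    obtain ⟨hcard, S, hS, hIS⟩ := hI
    refine ⟨hcard, S, ?_, hIS⟩
    simp only [U2, Set.mem_setOf_eq] at hS
    obtain ⟨T, hT, rfl⟩ := hS
    simp only [U1, Set.mem_setOf_eq]
    rw [Finset.card_biUnion]
    · rw [Finset.sum_congr rfl (fun p _ => (hT p).2), Finset.sum_const, Finset.card_univ,
        Fintype.card_fin, smul_eq_mul]
      exact Nat.mul_div_cancel' hms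
    · intro a _ b _ hab
      rw [Function.onFun, Finset.disjoint_left]
      intro x hxa hxb
      have h1 := (hT a).1 hxa
      have h2 := (hT b).1 hxb
      simp only [piece, Finset.mem_filter, Finset.mem_univ, true_and] at h1 h2
      exact hab (Fin.ext (h1 ▸ h2))
end

section
/- Let N, s, m be positive integers with m dividing both N and s and s ≤ N, and let U₂ be the piece-wise sparsity family. Then for every 0 ≤ i ≤ s, Q(i,U₂) = Σ ∏_{l=1}^{m} C(N/m, j_l), where the sum is over all m-tuples (j_1,…,j_m) of integers with 0 ≤ j_l ≤ s/m for each l and j_1 + ⋯ + j_m = i, and C(a,b) denotes the binomial coefficient. -/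
open scoped Classical

section Aux

variable {N m : ℕ}

lemma mem_piece_iff {a : Fin N} {l : Fin m} :
    a ∈ piece N m l ↔ a.val / (N / m) = l.val := by
  simp [piece]

lemma piece_disjoint {l l' : Fin m} (h : l ≠ l') :
    Disjoint (piece N m l) (piece N m l') := by
  rw [Finset.disjoint_left]
  intro a ha ha'
  rw [mem_piece_iff] at ha ha'
  exact h (Fin.ext (ha ▸ ha'))

lemma div_lt_of_fin (hN : 0 < N) (hm : 0 < m) (hmN : m ∣ N) (a : Fin N) :
    a.val / (N / m) < m := by
  have hk0 : 0 < N / m := Nat.div_pos (Nat.le_of_dvd hN hmN) hm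
  rw [Nat.div_lt_iff_lt_mul hk0]
  have hNk : N = m * (N / m) := (Nat.mul_div_cancel' hmN).symm
  have := a.isLt
  omega

lemma cover_eq (hN : 0 < N) (hm : 0 < m) (hmN : m ∣ N) (I : Finset (Fin N)) :
    I = Finset.univ.biUnion (fun l : Fin m => I ∩ piece N m l) := by
  ext a
  simp only [Finset.mem_biUnion, Finset.mem_univ, true_and, Finset.mem_inter]
  constructor
  · intro ha
    exact ⟨⟨a.val / (N / m), div_lt_of_fin hN hm hmN a⟩, ha, mem_piece_iff.2 rfl⟩
  · rintro ⟨l, ha, -⟩; exact ha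

lemma card_eq_sum_pieces (hN : 0 < N) (hm : 0 < m) (hmN : m ∣ N) (I : Finset (Fin N)) :
    I.card = ∑ l : Fin m, (I ∩ piece N m l).card := by
  conv_lhs => rw [cover_eq hN hm hmN I]
  rw [Finset.card_biUnion]
  intro l _ l' _ hll'
  exact (piece_disjoint hll').mono Finset.inter_subset_right Finset.inter_subset_right

lemma card_piece (hN : 0 < N) (hm : 0 < m) (hmN : m ∣ N) (l : Fin m) :
    (piece N m l).card = N / m := by
  set k := N / m with hk
  have hk0 : 0 < k := Nat.div_pos (Nat.le_of_dvd hN hmN) hm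
  have hNk : N = m * k := (Nat.mul_div_cancel' hmN).symm
  have hlt : ∀ x : Fin k, l.val * k + x.val < N := by
    intro x
    have h1 : l.val + 1 ≤ m := l.isLt
    have h2 : x.val < k := x.isLt
    calc l.val * k + x.val < (l.val + 1) * k := by nlinarith
    _ ≤ m * k := Nat.mul_le_mul_right k h1
    _ = N := hNk.symm
  rw [show (piece N m l : Finset (Fin N)) =
      Finset.univ.image (fun x : Fin k => (⟨l.val * k + x.val, hlt x⟩ : Fin N)) from ?_]
  · rw [Finset.card_image_of_injective _ ?_, Finset.card_univ, Fintype.card_fin]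
    intro x y hxy
    have : l.val * k + x.val = l.val * k + y.val := congrArg Fin.val hxy
    exact Fin.ext (by omega)
  · ext a
    rw [mem_piece_iff]
    simp only [Finset.mem_image, Finset.mem_univ, true_and]
    constructor
    · intro ha
      refine ⟨⟨a.val % k, Nat.mod_lt _ hk0⟩, Fin.ext ?_⟩
      simp only
      rw [← ha, ← hk, Nat.mul_comm]
      exact Nat.div_add_mod a.val k
    · rintro ⟨x, rfl⟩
      simp only
      rw [← hk, show l.val * k + x.val = x.val + k * l.val by ring,
        Nat.add_mul_div_left _ _ hk0, Nat.div_eq_of_lt x.isLt, Nat.zero_add]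
end Aux

theorem Q_piecewise_eq_sum_prod_choose (N s m : ℕ)
    (hN : 0 < N) (hs : 0 < s) (hm : 0 < m) (hmN : m ∣ N) (hms : m ∣ s) (hsN : s ≤ N) :
    ∀ i ≤ s,
      Q i (U2 N s m) =
        ∑ j ∈ Finset.univ.filter
            (fun j : Fin m → Fin (s / m + 1) => ∑ l, ((j l : ℕ)) = i),
          ∏ l, Nat.choose (N / m) (j l) := by
  intro i hi
  classical
  set k := N / m with hk
  set r := s / m with hr
  have hrk : r ≤ k := Nat.div_le_div_right hsN
  have hcardpiece : ∀ l : Fin m, (piece N m l).card = k := card_piece hN hm hmN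
  -- Step A : characterize containment in a member of U2
  have hchar : ∀ I : Finset (Fin N),
      (∃ S ∈ U2 N s m, I ⊆ S) ↔ ∀ l : Fin m, (I ∩ piece N m l).card ≤ r := by
    intro I
    constructor
    · rintro ⟨S, ⟨T, hT, rfl⟩, hIS⟩ l
      have hsub : I ∩ piece N m l ⊆ T l := by
        intro a ha
        rw [Finset.mem_inter] at ha
        obtain ⟨l', -, ha'⟩ := Finset.mem_biUnion.1 (hIS ha.1)
        have : l' = l := by
          by_contra hne
          exact Finset.disjoint_left.1 (piece_disjoint hne)
            ((hT l').1 ha') ha.2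
        exact this ▸ ha'
      calc (I ∩ piece N m l).card ≤ (T l).card := Finset.card_le_card hsub
        _ = r := by rw [(hT l).2]
    · intro hle
      have : ∀ l : Fin m, ∃ u, I ∩ piece N m l ⊆ u ∧ u ⊆ piece N m l ∧ u.card = r := by
        intro l
        exact Finset.exists_subsuperset_card_eq Finset.inter_subset_right (hle l)
          (by rw [hcardpiece l]; exact hrk)
      choose T hT1 hT2 hT3 using this
      refine ⟨Finset.univ.biUnion T, ⟨T, fun l => ⟨hT2 l, hT3 l⟩, rfl⟩, ?_⟩
      intro a ha
      rw [cover_eq hN hm hmN I] at ha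
      obtain ⟨l, -, ha⟩ := Finset.mem_biUnion.1 ha
      exact Finset.mem_biUnion.2 ⟨l, Finset.mem_univ l, hT1 l ha⟩
  -- the set we count
  have hQ : Q i (U2 N s m) =
      (Finset.univ.filter fun I : Finset (Fin N) =>
        I.card = i ∧ ∀ l : Fin m, (I ∩ piece N m l).card ≤ r).card := by
    unfold Q
    congr 1
    apply Finset.filter_congr
    intro I _
    simp only [hchar I]
  rw [hQ]
  -- Step B : fiberwise count
  set t := Finset.univ.filter
      (fun j : Fin m → Fin (r + 1) => ∑ l, ((j l : ℕ)) = i) with ht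
  set A := Finset.univ.filter (fun I : Finset (Fin N) =>
      I.card = i ∧ ∀ l : Fin m, (I ∩ piece N m l).card ≤ r) with hA
  have hf : ∀ I ∈ A, (fun l : Fin m =>
      (⟨min ((I ∩ piece N m l).card) r, by omega⟩ : Fin (r + 1))) ∈ t := by
    intro I hI
    rw [hA, Finset.mem_filter] at hI
    obtain ⟨-, hcard, hle⟩ := hI
    rw [ht, Finset.mem_filter]
    refine ⟨Finset.mem_univ _, ?_⟩
    simp only
    calc (∑ l : Fin m, min ((I ∩ piece N m l).card) r)
        = ∑ l : Fin m, (I ∩ piece N m l).card :=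
          Finset.sum_congr rfl (fun l _ => min_eq_left (hle l))
      _ = I.card := (card_eq_sum_pieces hN hm hmN I).symm
      _ = i := hcard
  rw [Finset.card_eq_sum_card_fiberwise hf]
  apply Finset.sum_congr rfl
  intro j hj
  rw [ht, Finset.mem_filter] at hj
  obtain ⟨-, hjsum⟩ := hj
  -- the fiber over j
  have hfiber : A.filter (fun I => (fun l : Fin m =>
      (⟨min ((I ∩ piece N m l).card) r, by omega⟩ : Fin (r + 1))) = j)
      = Finset.univ.filter (fun I : Finset (Fin N) =>
          ∀ l : Fin m, (I ∩ piece N m l).card = (j l : ℕ)) := by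
    ext I
    simp only [Finset.mem_filter, hA, Finset.mem_univ, true_and]
    constructor
    · rintro ⟨⟨hcard, hle⟩, hfeq⟩ l
      have := congrFun hfeq l
      have h2 : min ((I ∩ piece N m l).card) r = (j l : ℕ) := congrArg Fin.val this
      rw [min_eq_left (hle l)] at h2
      exact h2
    · intro heq
      have hle : ∀ l : Fin m, (I ∩ piece N m l).card ≤ r := by
        intro l; rw [heq l]; exact Nat.lt_succ_iff.1 (j l).isLt
      refine ⟨⟨?_, hle⟩, ?_⟩
      · rw [card_eq_sum_pieces hN hm hmN I, ← hjsum]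
        exact Finset.sum_congr rfl (fun l _ => heq l)
      · funext l
        refine Fin.ext ?_
        simp only
        rw [heq l]
        exact min_eq_left (Nat.lt_succ_iff.1 (j l).isLt)
  rw [hfiber]
  -- count the fiber : bijection with products of subsets of pieces
  have hbij : (Finset.univ.filter (fun I : Finset (Fin N) =>
      ∀ l : Fin m, (I ∩ piece N m l).card = (j l : ℕ))).card
      = (Fintype.piFinset (fun l : Fin m => (piece N m l).powersetCard (j l : ℕ))).card := by
    apply Finset.card_nbij' (fun I => fun l : Fin m => I ∩ piece N m l)
      (fun T => Finset.univ.biUnion T)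
    · intro I hI
      rw [Finset.mem_coe, Finset.mem_filter] at hI
      rw [Finset.mem_coe, Fintype.mem_piFinset]
      intro l
      rw [Finset.mem_powersetCard]
      exact ⟨Finset.inter_subset_right, hI.2 l⟩
    · intro T hT
      rw [Finset.mem_coe, Fintype.mem_piFinset] at hT
      rw [Finset.mem_coe, Finset.mem_filter]
      refine ⟨Finset.mem_univ _, fun l => ?_⟩
      have hTl := fun l => Finset.mem_powersetCard.1 (hT l)
      have : Finset.univ.biUnion T ∩ piece N m l = T l := by
        ext a
        simp only [Finset.mem_inter, Finset.mem_biUnion, Finset.mem_univ, true_and]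
        constructor
        · rintro ⟨⟨l', ha'⟩, hap⟩
          have : l' = l := by
            by_contra hne
            exact Finset.disjoint_left.1 (piece_disjoint hne) ((hTl l').1 ha') hap
          exact this ▸ ha'
        · intro ha
          exact ⟨⟨l, ha⟩, (hTl l).1 ha⟩
      rw [this]; exact (hTl l).2
    · intro I hI
      exact (cover_eq hN hm hmN I).symm
    · intro T hT
      rw [Finset.mem_coe, Fintype.mem_piFinset] at hT
      have hTl := fun l => Finset.mem_powersetCard.1 (hT l)
      funext l
      ext a
      simp only [Finset.mem_inter, Finset.mem_biUnion, Finset.mem_univ, true_and]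
      constructor
      · rintro ⟨⟨l', ha'⟩, hap⟩
        have : l' = l := by
          by_contra hne
          exact Finset.disjoint_left.1 (piece_disjoint hne) ((hTl l').1 ha') hap
        exact this ▸ ha'
      · intro ha
        exact ⟨⟨l, ha⟩, (hTl l).1 ha⟩
  rw [hbij, Fintype.card_piFinset]
  apply Finset.prod_congr rfl
  intro l _
  rw [Finset.card_powersetCard, hcardpiece l]
end

section
/- Let N, s, m be positive integers with m dividing both N and s and s ≤ N. Define the permutation σ of {1,…,N} by σ(qm + r + 1) = r·(N/m) + q + 1 for 0 ≤ q < N/m and 0 ≤ r < m. Then σ maps every member of the block sparsity family U₃ to a member of the piece-wise sparsity family U₂; that is, for every S ∈ U₃, the image σ(S) belongs to U₂. -/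
open scoped Classical

/-- The permutation of `{1,…,N}` sending (0-indexed) `q·m + r` to `r·(N/m) + q`
for `0 ≤ q < N/m`, `0 ≤ r < m`. -/
def sigmaFun (N m : ℕ) (hm : 0 < m) (hmN : m ∣ N) (a : Fin N) : Fin N :=
  ⟨(a.val % m) * (N / m) + a.val / m, by
    have hq : a.val / m < N / m := Nat.div_lt_div_of_lt_of_dvd hmN a.isLt
    have hr : a.val % m < m := Nat.mod_lt _ hm
    calc (a.val % m) * (N / m) + a.val / m
        < (a.val % m) * (N / m) + N / m := Nat.add_lt_add_left hq _
      _ = (a.val % m + 1) * (N / m) := by ring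
      _ ≤ m * (N / m) := Nat.mul_le_mul_right _ (Nat.succ_le_of_lt hr)
      _ = N := Nat.mul_div_cancel' hmN⟩

theorem image_sigmaFun_block_mem_piecewise (N s m : ℕ)
    (hN : 0 < N) (hs : 0 < s) (hm : 0 < m) (hmN : m ∣ N) (hms : m ∣ s) (hsN : s ≤ N) :
    ∀ S ∈ U3 N s m, S.image (sigmaFun N m hm hmN) ∈ U2 N s m := by
  rintro S ⟨I, hI, rfl⟩
  have hk0 : 0 < N / m := Nat.div_pos (Nat.le_of_dvd hN hmN) hm
  have hkm : m * (N / m) = N := Nat.mul_div_cancel' hmN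
  have hb : ∀ (r : Fin m) (i : Fin (N / m)), r.val * (N / m) + i.val < N := by
    intro r i
    calc r.val * (N / m) + i.val < r.val * (N / m) + N / m :=
          Nat.add_lt_add_left i.isLt _
      _ = (r.val + 1) * (N / m) := by ring
      _ ≤ m * (N / m) := Nat.mul_le_mul_right _ r.isLt
      _ = N := hkm
  refine ⟨fun r => I.image fun i => ⟨r.val * (N / m) + i.val, hb r i⟩, fun r => ⟨?_, ?_⟩, ?_⟩
  · intro a ha
    simp only [Finset.mem_image] at ha
    obtain ⟨i, hi, rfl⟩ := ha
    simp only [piece, Finset.mem_filter, Finset.mem_univ, true_and]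
    rw [Nat.mul_comm, Nat.mul_add_div hk0, Nat.div_eq_of_lt i.isLt]
    omega
  · rw [Finset.card_image_of_injOn, hI]
    intro i _ j _ hij
    have : r.val * (N / m) + i.val = r.val * (N / m) + j.val := congrArg Fin.val hij
    exact Fin.ext (by omega)
  · ext a
    simp only [Finset.mem_image, Finset.mem_biUnion, Finset.mem_univ, true_and, block,
      Finset.mem_filter]
    constructor
    · rintro ⟨b, ⟨i, hi, hbi⟩, rfl⟩
      refine ⟨⟨b.val % m, Nat.mod_lt _ hm⟩, i, hi, ?_⟩
      apply Fin.ext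
      simp [sigmaFun, hbi]
    · rintro ⟨r, i, hi, rfl⟩
      have hlt : i.val * m + r.val < N := by
        have h1 : (i.val + 1) * m ≤ (N / m) * m := Nat.mul_le_mul_right _ i.isLt
        have h2 : N / m * m = N := Nat.div_mul_cancel hmN
        have h3 : i.val * m + m = (i.val + 1) * m := by ring
        have := r.isLt
        omega
      refine ⟨⟨i.val * m + r.val, hlt⟩, ⟨i, hi, ?_⟩, ?_⟩
      · show (i.val * m + r.val) / m = i.val
        rw [Nat.mul_comm, Nat.mul_add_div hm, Nat.div_eq_of_lt r.isLt]
        omega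
      · apply Fin.ext
        show (i.val * m + r.val) % m * (N / m) + (i.val * m + r.val) / m = _
        rw [Nat.mul_comm i.val, Nat.mul_add_mod, Nat.mod_eq_of_lt r.isLt,
          Nat.mul_add_div hm, Nat.div_eq_of_lt r.isLt]
        simp
end

section
/- Let A ∈ ℝ^{N×N} be symmetric, let w ∈ ℝ^N have all entries nonzero, let Λ ∈ ℝ^{N×N} be an invertible diagonal matrix, and set Ā = Λ(A ⊙ (w wᵀ)). Suppose I ⊆ {1,…,N} is such that every row of A indexed by I is zero and the principal submatrix A_{I^c,I^c} (rows and columns indexed by the complement I^c of I) is non-singular. Then for every S ⊆ {1,…,N} with I ⊆ S, the N × (N+|S|) matrix [Ā, I_S] has rank N, where I_S is the submatrix of the N × N identity matrix formed by the columns indexed by S. -/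
open Matrix

open scoped Classical

/-- Let `A` be symmetric, `w` have all entries nonzero, `Λ = diagonal d` be an invertible
diagonal matrix, and `Ā = Λ (A ⊙ w wᵀ)`. If every row of `A` indexed by `I` is zero and the
principal submatrix `A_{Iᶜ,Iᶜ}` is non-singular, then for every `S ⊇ I` the matrix `[Ā, I_S]`
has rank `N`. -/
theorem rank_append_identity_columns_of_zero_rows {N : ℕ}
    (A : Matrix (Fin N) (Fin N) ℝ) (w : Fin N → ℝ) (d : Fin N → ℝ)
    (hA : A.IsSymm) (hw : ∀ i, w i ≠ 0) (hd : ∀ i, d i ≠ 0)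
    (I : Finset (Fin N))
    (hrows : ∀ i ∈ I, ∀ j, A i j = 0)
    (hsub : (A.submatrix (Subtype.val : {i : Fin N // i ∈ Iᶜ} → Fin N)
        (Subtype.val : {i : Fin N // i ∈ Iᶜ} → Fin N)).det ≠ 0) :
    ∀ S : Finset (Fin N), I ⊆ S →
      (Matrix.fromCols (Matrix.diagonal d * Matrix.hadamard A (Matrix.vecMulVec w w))
          ((1 : Matrix (Fin N) (Fin N) ℝ).submatrix id
            (Subtype.val : {i : Fin N // i ∈ S} → Fin N))).rank = N := by
  intro S hIS
  set Ab : Matrix (Fin N) (Fin N) ℝ :=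
    Matrix.diagonal d * Matrix.hadamard A (Matrix.vecMulVec w w) with hAb
  set E : Matrix (Fin N) {i : Fin N // i ∈ S} ℝ :=
    (1 : Matrix (Fin N) (Fin N) ℝ).submatrix id Subtype.val with hE
  set M := Matrix.fromCols Ab E with hM
  set B : Matrix {i : Fin N // i ∈ Iᶜ} {i : Fin N // i ∈ Iᶜ} ℝ :=
    A.submatrix Subtype.val Subtype.val with hB
  have hinj : Function.Injective (Mᵀ.mulVecLin) := by
    rw [← LinearMap.ker_eq_bot, LinearMap.ker_eq_bot']
    intro v hv
    have hv' : ∀ k, (v ᵥ* M) k = 0 := by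
      intro k
      have := congrFun hv k
      simpa [Matrix.mulVecLin_apply, Matrix.mulVec_transpose] using this
    -- v vanishes on S
    have hvS : ∀ s : Fin N, s ∈ S → v s = 0 := by
      intro s hs
      have := hv' (Sum.inr ⟨s, hs⟩)
      simpa [hM, Matrix.vecMul_fromCols, hE, Matrix.vecMul, dotProduct,
        Matrix.one_apply, Finset.sum_ite_eq'] using this
    -- the Ā part
    have hAbcol : ∀ j, (v ᵥ* Ab) j = 0 := by
      intro j
      have := hv' (Sum.inl j)
      simpa [hM, Matrix.vecMul_fromCols] using this
    set x : Fin N → ℝ := fun i => v i * d i * w i with hx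
    have hxI : ∀ i ∈ I, x i = 0 := by
      intro i hi
      simp [hx, hvS i (hIS hi)]
    have hxcol : ∀ j, (∑ i, x i * A i j) = 0 := by
      intro j
      have h1 : (∑ i, x i * A i j) * w j = 0 := by
        have := hAbcol j
        rw [Finset.sum_mul]
        rw [Matrix.vecMul] at this
        simp only [dotProduct, hAb, Matrix.diagonal_mul, Matrix.hadamard_apply,
          Matrix.vecMulVec_apply] at this
        rw [← this]
        apply Finset.sum_congr rfl
        intro i _
        simp [hx]; ring
      rcases mul_eq_zero.mp h1 with h | h
      · exact h
      · exact absurd h (hw j)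
    -- restrict to Iᶜ
    set y : {i : Fin N // i ∈ Iᶜ} → ℝ := fun i => x i.val with hy
    have hyB : y ᵥ* B = 0 := by
      funext j
      have : (∑ i ∈ Iᶜ, x i * A i j.val) = 0 := by
        rw [← hxcol j.val]
        apply Finset.sum_subset (Finset.subset_univ _)
        intro i _ hi
        have hiI : i ∈ I := by simpa using hi
        simp [hrows i hiI]
      rw [← Finset.sum_coe_sort Iᶜ (fun i => x i * A i j.val)] at this
      simpa [Matrix.vecMul, dotProduct, hy, hB] using this
    have hy0 : y = 0 := by
      have hunit : IsUnit B.det := isUnit_iff_ne_zero.mpr hsub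
      have hBinv : B * B⁻¹ = 1 := Matrix.mul_nonsing_inv B hunit
      calc y = y ᵥ* (B * B⁻¹) := by rw [hBinv, Matrix.vecMul_one]
        _ = (y ᵥ* B) ᵥ* B⁻¹ := by rw [Matrix.vecMul_vecMul]
        _ = 0 := by rw [hyB, Matrix.zero_vecMul]
    have hx0 : ∀ i, x i = 0 := by
      intro i
      by_cases hi : i ∈ I
      · exact hxI i hi
      · have : i ∈ Iᶜ := Finset.mem_compl.mpr hi
        exact congrFun hy0 ⟨i, this⟩
    funext i
    by_cases hi : i ∈ S
    · exact hvS i hi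
    · have := hx0 i
      simp only [hx] at this
      rcases mul_eq_zero.mp this with h | h
      · rcases mul_eq_zero.mp h with h' | h'
        · exact h'
        · exact absurd h' (hd i)
      · exact absurd h (hw i)
  have h1 : M.rank = Mᵀ.rank := (Matrix.rank_transpose M).symm
  rw [h1, Matrix.rank, LinearMap.finrank_range_of_inj hinj]
  simp
end
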